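/- arXiv:1605.02045 — 3 statements merged into one kernel-verified Lean document; each statement's English description precedes it below -/
import Mathlib

section
/- A semi-labeled tree is determined by its set of clusters: if two semi-labeled trees on the same label set have equal cluster sets, then they are isomorphic (there is a graph isomorphism of the underlying trees commuting with the labeling functions). -/
open Function Set

/-- A finite rooted tree on a vertex type `V`, presented by its parent function:
the root is a fixed point of `parent`, and every vertex reaches the root by
iterating `parent`. -/
structure ParentTree (V : Type*) where
  root : V
  parent : V → V
  parent_root : parent root = root
  reaches_root : ∀ v : V, ∃ n : ℕ, parent^[n] v = root

namespace ParentTree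

variable {V : Type*}

/-- `u ≤_T v`: `u` lies on the path from `v` to the root `r(T)`. -/
def anc (t : ParentTree V) (u v : V) : Prop := ∃ n : ℕ, t.parent^[n] v = u

/-- The set of children of a vertex. -/
def children (t : ParentTree V) (v : V) : Set V := {u | u ≠ v ∧ t.parent u = v}

/-- Undirected adjacency in the underlying tree. -/
def adj (t : ParentTree V) (u v : V) : Prop :=
  u ≠ v ∧ (t.parent u = v ∨ t.parent v = u)

/-- The degree of a vertex in the underlying undirected tree: the number of its
neighbors (its children, plus its parent when it is not the root). -/
noncomputable def degree (t : ParentTree V) (v : V) : ℕ :=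
  {u : V | t.adj u v}.ncard

end ParentTree

/-- A semi-labeled tree `(T, φ)`: a rooted tree together with a label set
`labels ⊆ L` and a labeling map `lab` (the map `φ`), such that every node with
at most one child (equivalently, in the rooted setting, every node of small
degree that would be suppressible) carries at least one label.  This is the
rooted form of the requirement that every node of degree at most two is in the
image of `φ`. -/
structure SemiLabeledTree (L V : Type*) extends ParentTree V where
  labels : Set L
  lab : L → V
  labeled_of_few_children :
    ∀ v : V, (ParentTree.children toParentTree v).ncard ≤ 1 → ∃ ℓ ∈ labels, lab ℓ = v

namespace SemiLabeledTree

variable {L V : Type*}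

/-- The set `φ⁻¹(v)` of labels of a node `v`. -/
def labelsOf (T : SemiLabeledTree L V) (v : V) : Set L := {ℓ ∈ T.labels | T.lab ℓ = v}

/-- Every node is labeled. -/
def FullyLabeled (T : SemiLabeledTree L V) : Prop := ∀ v : V, ∃ ℓ ∈ T.labels, T.lab ℓ = v

/-- Every node has at most one label. -/
def SingularlyLabeled (T : SemiLabeledTree L V) : Prop :=
  ∀ ℓ ∈ T.labels, ∀ ℓ' ∈ T.labels, T.lab ℓ = T.lab ℓ' → ℓ = ℓ'

/-- `ℓ ≤_T ℓ'`: the node of `ℓ` is an ancestor of the node of `ℓ'`. -/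
def labelLe (T : SemiLabeledTree L V) (ℓ ℓ' : L) : Prop :=
  T.toParentTree.anc (T.lab ℓ) (T.lab ℓ')

/-- `ℓ <_T ℓ'`: the node of `ℓ` is a proper ancestor of the node of `ℓ'`. -/
def labelLt (T : SemiLabeledTree L V) (ℓ ℓ' : L) : Prop :=
  T.labelLe ℓ ℓ' ∧ T.lab ℓ ≠ T.lab ℓ'

/-- `ℓ ∥_T ℓ'`: the nodes of `ℓ` and `ℓ'` are incomparable. -/
def labelPar (T : SemiLabeledTree L V) (ℓ ℓ' : L) : Prop :=
  ¬ T.labelLe ℓ ℓ' ∧ ¬ T.labelLe ℓ' ℓ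

/-- The cluster `X(u)`: all labels carried by descendants of `u`. -/
def cluster (T : SemiLabeledTree L V) (u : V) : Set L :=
  {ℓ ∈ T.labels | T.toParentTree.anc u (T.lab ℓ)}

/-- The set of clusters `Cl(T)`. -/
def Cl (T : SemiLabeledTree L V) : Set (Set L) := {X | ∃ u : V, X = T.cluster u}

/-- `D(T)`: ordered pairs of labels in strict ancestor relation. -/
def Dset (T : SemiLabeledTree L V) : Set (L × L) :=
  {p | p.1 ∈ T.labels ∧ p.2 ∈ T.labels ∧ T.labelLt p.1 p.2}

/-- `N(T)`: unordered pairs of incomparable labels. -/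
def Nset (T : SemiLabeledTree L V) : Set (Sym2 L) :=
  {z | ∃ ℓ ℓ' : L, z = Sym2.mk ℓ ℓ' ∧ ℓ ∈ T.labels ∧ ℓ' ∈ T.labels ∧ T.labelPar ℓ ℓ'}

end SemiLabeledTree

/-- The cluster set of the restriction `T|A`:
`{ X ∩ A : X ∈ C, X ∩ A ≠ ∅ }`. -/
def restrictCl {L : Type*} (C : Set (Set L)) (A : Set L) : Set (Set L) :=
  {Y | ∃ X ∈ C, Y = X ∩ A ∧ Y.Nonempty}

/-- `T` ancestrally displays `T'`: `Cl(T') ⊆ Cl(T | L(T'))`. -/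
def Displays {L V W : Type*} (T : SemiLabeledTree L V) (T' : SemiLabeledTree L W) : Prop :=
  T'.Cl ⊆ restrictCl T.Cl T'.labels

section Profile

variable {L V : Type*} {k : ℕ}

/-- The label set `L(P)` of a profile. -/
def LP (P : Fin k → SemiLabeledTree L V) : Set L := ⋃ i, (P i).labels

/-- `P` is ancestrally compatible: some semi-labeled tree on the label set
`L(P)` ancestrally displays every tree of the profile. -/
def AncCompat (P : Fin k → SemiLabeledTree L V) : Prop :=
  ∃ (W : Type) (_ : Fintype W) (T : SemiLabeledTree L W),
    T.labels = LP P ∧ ∀ i, Displays T (P i)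

/-- The restricted profile `P|X` is ancestrally compatible: some semi-labeled
tree on label set `L(P) ∩ X` ancestrally displays each restriction
`Tᵢ|(X ∩ L(Tᵢ))` (displaying is expressed via cluster sets, since the
restriction is determined by its cluster set). -/
def AncCompatOn (P : Fin k → SemiLabeledTree L V) (X : Set L) : Prop :=
  ∃ (W : Type) (_ : Fintype W) (T : SemiLabeledTree L W),
    T.labels = LP P ∩ X ∧
    ∀ i, restrictCl (P i).Cl (X ∩ (P i).labels) ⊆ restrictCl T.Cl (X ∩ (P i).labels)

/-- `Desc_i(U)`: labels of `Tᵢ` descending from some member of `U(i)`. -/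
def Desci (P : Fin k → SemiLabeledTree L V) (U : Fin k → Set L) (i : Fin k) : Set L :=
  {ℓ ∈ (P i).labels | ∃ ℓ' ∈ U i, (P i).labelLe ℓ' ℓ}

/-- `Desc_P(U) = ⋃ i, Desc_i(U)`. -/
def DescP (P : Fin k → SemiLabeledTree L V) (U : Fin k → Set L) : Set L :=
  ⋃ i, Desci P U i

/-- A valid position: each `U(i) ⊆ L(Tᵢ)`; (V1) if `|U(i)| ≥ 2` then the
elements of `U(i)` are siblings in `Tᵢ` (children of a common node `p`);
(V2) `Desc_i(U) = Desc_P(U) ∩ L(Tᵢ)`. -/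
def ValidPos (P : Fin k → SemiLabeledTree L V) (U : Fin k → Set L) : Prop :=
  (∀ i, U i ⊆ (P i).labels) ∧
  (∀ i, (∃ a ∈ U i, ∃ b ∈ U i, a ≠ b) →
    ∃ p : V, ∀ a ∈ U i, (P i).lab a ≠ p ∧ (P i).parent ((P i).lab a) = p) ∧
  (∀ i, Desci P U i = DescP P U ∩ (P i).labels)

/-- `ℓ` is semi-universal in `U`: `ℓ` occurs in `U`, and `U(i) = {ℓ}` for every
`i` with `ℓ ∈ L(Tᵢ)`. -/
def SemiUniversal (P : Fin k → SemiLabeledTree L V) (U : Fin k → Set L) (ℓ : L) : Prop :=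
  (∃ i, ℓ ∈ U i) ∧ ∀ i, ℓ ∈ (P i).labels → U i = {ℓ}

/-- `Ch_i(ℓ)`: the labels of the children of (the node of) `ℓ` in `Tᵢ`. -/
def ChL (P : Fin k → SemiLabeledTree L V) (i : Fin k) (ℓ : L) : Set L :=
  {m ∈ (P i).labels |
    (P i).lab m ≠ (P i).lab ℓ ∧ (P i).parent ((P i).lab m) = (P i).lab ℓ}

/-- The successor of `U` with respect to `S`: if `U(i) = {ℓ}` for some `ℓ ∈ S`
then `U'(i) = Ch_i(ℓ)`, otherwise `U'(i) = U(i)`. -/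
def Succ (P : Fin k → SemiLabeledTree L V) (U : Fin k → Set L) (S : Set L) :
    Fin k → Set L := fun i =>
  {m | (∃ ℓ ∈ S, U i = {ℓ} ∧ m ∈ ChL P i ℓ) ∨ ((¬ ∃ ℓ ∈ S, U i = {ℓ}) ∧ m ∈ U i)}

/-- Adjacency in the display graph `H_P`: labels `ℓ, m` are adjacent when in
some input tree the node of one is the parent of the node of the other. -/
def dgAdj (P : Fin k → SemiLabeledTree L V) (ℓ m : L) : Prop :=
  ∃ i, ℓ ∈ (P i).labels ∧ m ∈ (P i).labels ∧
    (((P i).parent ((P i).lab m) = (P i).lab ℓ ∧ (P i).lab m ≠ (P i).lab ℓ) ∨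
     ((P i).parent ((P i).lab ℓ) = (P i).lab m ∧ (P i).lab ℓ ≠ (P i).lab m))

/-- Adjacency in the subgraph of `H_P` induced by `X`. -/
def dgAdjOn (P : Fin k → SemiLabeledTree L V) (X : Set L) (ℓ m : L) : Prop :=
  ℓ ∈ X ∧ m ∈ X ∧ dgAdj P ℓ m

/-- Reachability (connectivity) in the subgraph of `H_P` induced by `X`. -/
def dgReach (P : Fin k → SemiLabeledTree L V) (X : Set L) : L → L → Prop :=
  Relation.ReflTransGen (dgAdjOn P X)

/-- `W 0, …, W (p-1)` are (the label sets of) the connected components of the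
subgraph of the display graph `H_P` induced by `X`: they are nonempty subsets
of `X` partitioning `X`, and two labels lie in a common `W j` iff they are
connected in the induced subgraph. -/
def IsComponents (P : Fin k → SemiLabeledTree L V) (X : Set L) {p : ℕ}
    (W : Fin p → Set L) : Prop :=
  (∀ j, (W j).Nonempty) ∧ (∀ j, W j ⊆ X) ∧
  (∀ ℓ ∈ X, ∃! j, ℓ ∈ W j) ∧
  (∀ ℓ m : L, (∃ j, ℓ ∈ W j ∧ m ∈ W j) ↔ (ℓ ∈ X ∧ m ∈ X ∧ dgReach P X ℓ m))

end Profile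

namespace ParentTree

open scoped Classical

variable {V : Type*}

theorem anc_refl' (t : ParentTree V) (u : V) : t.anc u u := ⟨0, rfl⟩

theorem anc_trans' (t : ParentTree V) {u v w : V} (h : t.anc u v) (h' : t.anc v w) :
    t.anc u w := by
  obtain ⟨n, hn⟩ := h; obtain ⟨m, hm⟩ := h'
  exact ⟨n + m, by rw [Function.iterate_add_apply, hm, hn]⟩

theorem anc_antisymm' (t : ParentTree V) {u v : V} (h : t.anc u v) (h' : t.anc v u) :
    u = v := by
  obtain ⟨n, hn⟩ := h; obtain ⟨m, hm⟩ := h'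
  rcases Nat.eq_zero_or_pos (n + m) with h0 | hpos
  · have hn0 : n = 0 := by omega
    subst hn0; simpa using hn.symm
  · have hper : t.parent^[n + m] u = u := by
      rw [Function.iterate_add_apply, hm, hn]
    obtain ⟨N, hN⟩ := t.reaches_root u
    have hq : ∀ q, t.parent^[(n + m) * q] u = u := by
      intro q; induction q with
      | zero => simp
      | succ q ih => rw [Nat.mul_succ, Function.iterate_add_apply, hper, ih]
    have hNle : N ≤ (n + m) * (N + 1) := by
      calc N ≤ N + 1 := by omega
        _ ≤ (n + m) * (N + 1) := Nat.le_mul_of_pos_left _ hpos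
    have hroot : u = t.root := by
      have h1 := hq (N + 1)
      have heq : (n + m) * (N + 1) = ((n + m) * (N + 1) - N) + N := by omega
      rw [heq, Function.iterate_add_apply, hN,
        Function.iterate_fixed t.parent_root] at h1
      exact h1.symm
    rw [hroot, Function.iterate_fixed t.parent_root] at hm
    rw [hroot, hm]

theorem anc_comparable' (t : ParentTree V) {u v w : V} (h : t.anc u w) (h' : t.anc v w) :
    t.anc u v ∨ t.anc v u := by
  obtain ⟨n, hn⟩ := h; obtain ⟨m, hm⟩ := h'
  rcases le_total n m with hle | hle
  · right
    exact ⟨m - n, by rw [← hn, ← Function.iterate_add_apply, Nat.sub_add_cancel hle, hm]⟩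
  · left
    exact ⟨n - m, by rw [← hm, ← Function.iterate_add_apply, Nat.sub_add_cancel hle, hn]⟩

/-- depth of a vertex: least number of parent steps to the root. -/
noncomputable def depth (t : ParentTree V) (v : V) : ℕ := Nat.find (t.reaches_root v)

theorem depth_parent_lt' (t : ParentTree V) {c : V} (hc : t.parent c ≠ c) :
    t.depth (t.parent c) < t.depth c := by
  have hspec : t.parent^[t.depth c] c = t.root := Nat.find_spec (t.reaches_root c)
  have h0 : t.depth c ≠ 0 := by
    intro h
    rw [h] at hspec
    simp only [Function.iterate_zero, id_eq] at hspec
    apply hc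
    rw [hspec, t.parent_root, ← hspec]
  obtain ⟨m, hm⟩ : ∃ m, t.depth c = m + 1 := ⟨t.depth c - 1, by omega⟩
  rw [hm, Function.iterate_succ_apply] at hspec
  have hle : t.depth (t.parent c) ≤ m := Nat.find_le hspec
  omega

theorem eq_of_anc_children' (t : ParentTree V) {u c c' : V}
    (hc : c ∈ t.children u) (hc' : c' ∈ t.children u) (h : t.anc c c') : c = c' := by
  obtain ⟨m, hm⟩ := h
  match m, hm with
  | 0, hm => exact hm.symm
  | m + 1, hm =>
    rw [Function.iterate_succ_apply, hc'.2] at hm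
    have h1 : t.anc c u := ⟨m, hm⟩
    have h2 : t.anc u c := ⟨1, by simpa using hc.2⟩
    exact absurd (t.anc_antisymm' h2 h1).symm hc.1

/-- covering characterization of the parent relation. -/
theorem parent_eq_iff' (t : ParentTree V) (u v : V) :
    (t.parent v = u ∧ u ≠ v) ↔
      (t.anc u v ∧ u ≠ v ∧ ∀ w, t.anc u w → t.anc w v → w = u ∨ w = v) := by
  constructor
  · rintro ⟨hp, hne⟩
    refine ⟨⟨1, by simpa using hp⟩, hne, ?_⟩
    rintro w huw ⟨m, hm⟩
    match m, hm with
    | 0, hm => exact Or.inr hm.symm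
    | m + 1, hm =>
      rw [Function.iterate_succ_apply, hp] at hm
      exact Or.inl (t.anc_antisymm' ⟨m, hm⟩ huw)
  · rintro ⟨⟨n, hn⟩, hne, hcov⟩
    refine ⟨?_, hne⟩
    have hvv : t.parent v ≠ v := by
      intro h
      apply hne
      rw [← hn, Function.iterate_fixed h]
    have h1 : t.anc (t.parent v) v := ⟨1, by simp⟩
    match n, hn with
    | 0, hn => exact absurd hn.symm hne
    | n + 1, hn =>
      rw [Function.iterate_succ_apply] at hn
      rcases hcov (t.parent v) ⟨n, hn⟩ h1 with h | h
      · exact h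
      · exact absurd h hvv

end ParentTree

namespace SemiLabeledTree

open ParentTree

variable {L V : Type*}

theorem mem_cluster_iff (T : SemiLabeledTree L V) {ℓ : L} {u : V} :
    ℓ ∈ T.cluster u ↔ ℓ ∈ T.labels ∧ T.toParentTree.anc u (T.lab ℓ) := Iff.rfl

theorem cluster_mono (T : SemiLabeledTree L V) {u v : V}
    (h : T.toParentTree.anc u v) : T.cluster v ⊆ T.cluster u := by
  rintro ℓ ⟨h1, h2⟩
  exact ⟨h1, T.toParentTree.anc_trans' h h2⟩

theorem cluster_nonempty [Fintype V] (T : SemiLabeledTree L V) (u : V) :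
    (T.cluster u).Nonempty := by
  classical
  set D : Finset V := Finset.univ.filter (fun w => T.toParentTree.anc u w) with hD
  have huD : u ∈ D := by simp [hD, T.toParentTree.anc_refl']
  obtain ⟨w, hwD, hmax⟩ := Finset.exists_max_image D (T.toParentTree.depth) ⟨u, huD⟩
  have hwanc : T.toParentTree.anc u w := by
    simpa [hD] using hwD
  have hempty : T.toParentTree.children w = ∅ := by
    ext c
    simp only [Set.mem_empty_iff_false, iff_false]
    rintro ⟨hcne, hcp⟩
    have hcD : c ∈ D := by
      simp only [hD, Finset.mem_filter, Finset.mem_univ, true_and]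
      exact T.toParentTree.anc_trans' hwanc ⟨1, by simpa using hcp⟩
    have h1 := hmax c hcD
    have h2 : T.toParentTree.depth (T.toParentTree.parent c) < T.toParentTree.depth c :=
      T.toParentTree.depth_parent_lt' (by rw [hcp]; exact hcne.symm)
    rw [hcp] at h2
    omega
  obtain ⟨ℓ, hℓ, hlab⟩ := T.labeled_of_few_children w (by rw [hempty]; simp)
  exact ⟨ℓ, hℓ, by rw [hlab]; exact hwanc⟩

theorem exists_mem_cluster_not_mem [Fintype V] (T : SemiLabeledTree L V) {u v : V}
    (h : T.toParentTree.anc u v) (hne : u ≠ v) :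
    ∃ ℓ ∈ T.cluster u, ℓ ∉ T.cluster v := by
  classical
  have hn0 : Nat.find h ≠ 0 := by
    intro h0
    have := Nat.find_spec h
    rw [h0] at this
    exact hne this.symm
  obtain ⟨m, hm⟩ : ∃ m, Nat.find h = m + 1 := ⟨Nat.find h - 1, by omega⟩
  set c : V := T.toParentTree.parent^[m] v with hc
  have hcp : T.toParentTree.parent c = u := by
    have := Nat.find_spec h
    rw [hm, Function.iterate_succ_apply'] at this
    exact this
  have hcne : c ≠ u := by
    intro hcu
    exact Nat.find_min h (by omega : m < Nat.find h) hcu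
  have hcchild : c ∈ T.toParentTree.children u := ⟨hcne, hcp⟩
  have hcv : T.toParentTree.anc c v := ⟨m, rfl⟩
  by_cases hfew : (T.toParentTree.children u).ncard ≤ 1
  · obtain ⟨ℓ, hℓ, hlab⟩ := T.labeled_of_few_children u hfew
    refine ⟨ℓ, ⟨hℓ, by rw [hlab]; exact T.toParentTree.anc_refl' u⟩, ?_⟩
    rintro ⟨-, hanc⟩
    rw [hlab] at hanc
    exact hne (T.toParentTree.anc_antisymm' h hanc)
  · obtain ⟨c', hc'mem, hc'ne⟩ :=
      Set.exists_ne_of_one_lt_ncard (by omega : 1 < (T.toParentTree.children u).ncard) c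
    obtain ⟨ℓ, hℓ⟩ := T.cluster_nonempty c'
    have hanc_uc' : T.toParentTree.anc u c' := ⟨1, by simpa using hc'mem.2⟩
    refine ⟨ℓ, T.cluster_mono hanc_uc' hℓ, ?_⟩
    rintro ⟨-, hvℓ⟩
    have hc'ℓ : T.toParentTree.anc c' (T.lab ℓ) := hℓ.2
    -- v and c' are comparable, hence the children c and c' are comparable
    have hcc' : T.toParentTree.anc c c' ∨ T.toParentTree.anc c' c := by
      rcases T.toParentTree.anc_comparable' hvℓ hc'ℓ with hvc' | hc'v
      · exact Or.inl (T.toParentTree.anc_trans' hcv hvc')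
      · exact T.toParentTree.anc_comparable' hcv hc'v
    rcases hcc' with h1 | h2
    · exact hc'ne (T.toParentTree.eq_of_anc_children' hcchild hc'mem h1).symm
    · exact hc'ne (T.toParentTree.eq_of_anc_children' hc'mem hcchild h2)

end SemiLabeledTree

namespace SemiLabeledTree

variable {L V : Type*}

theorem cluster_subset_iff [Fintype V] (T : SemiLabeledTree L V) (u w : V) :
    T.cluster w ⊆ T.cluster u ↔ T.toParentTree.anc u w := by
  constructor
  · intro hsub
    obtain ⟨ℓ, hℓ⟩ := T.cluster_nonempty w
    have hℓu := hsub hℓ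
    rcases T.toParentTree.anc_comparable' hℓu.2 hℓ.2 with huw | hwu
    · exact huw
    · by_cases heq : w = u
      · rw [heq]; exact T.toParentTree.anc_refl' u
      · obtain ⟨ℓ', hℓ'w, hℓ'u⟩ := T.exists_mem_cluster_not_mem hwu heq
        exact absurd (hsub hℓ'w) hℓ'u
  · exact T.cluster_mono

theorem cluster_inj [Fintype V] (T : SemiLabeledTree L V) {u w : V}
    (h : T.cluster u = T.cluster w) : u = w :=
  T.toParentTree.anc_antisymm'
    ((T.cluster_subset_iff u w).1 h.ge) ((T.cluster_subset_iff w u).1 h.le)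

end SemiLabeledTree

/-- A semi-labeled tree is determined by its cluster set: two
semi-labeled trees on the same label set with equal cluster sets are
isomorphic, via a bijection `ψ` of the vertex sets with `φ' = ψ ∘ φ` that
preserves edges in both directions. -/
theorem stmt7 {L V V' : Type*} [Fintype V] [Fintype V']
    (T : SemiLabeledTree L V) (T' : SemiLabeledTree L V')
    (hlab : T.labels = T'.labels) (hcl : T.Cl = T'.Cl) :
    ∃ ψ : V ≃ V',
      (∀ ℓ ∈ T.labels, T'.lab ℓ = ψ (T.lab ℓ)) ∧
      (∀ u v : V, T.toParentTree.adj u v ↔ T'.toParentTree.adj (ψ u) (ψ v)) := by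
  classical
  have hf' : ∀ u : V, ∃ u' : V', T.cluster u = T'.cluster u' := by
    intro u
    have : T.cluster u ∈ T'.Cl := by rw [← hcl]; exact ⟨u, rfl⟩
    exact this
  choose f hf using hf'
  have hg' : ∀ u' : V', ∃ u : V, T'.cluster u' = T.cluster u := by
    intro u'
    have : T'.cluster u' ∈ T.Cl := by rw [hcl]; exact ⟨u', rfl⟩
    exact this
  choose g hg using hg'
  have hgf : ∀ u : V, g (f u) = u := by
    intro u
    exact T.cluster_inj ((hg (f u)).symm.trans (hf u).symm)
  have hfg : ∀ u' : V', f (g u') = u' := by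
    intro u'
    exact T'.cluster_inj ((hf (g u')).symm.trans (hg u').symm)
  set ψ : V ≃ V' := ⟨f, g, hgf, hfg⟩ with hψ
  -- ancestor relation is transferred by ψ
  have hanc : ∀ a b : V, T.toParentTree.anc a b ↔ T'.toParentTree.anc (f a) (f b) := by
    intro a b
    rw [← T.cluster_subset_iff, ← T'.cluster_subset_iff, ← hf a, ← hf b]
  have hinjf : Function.Injective f := ψ.injective
  refine ⟨ψ, ?_, ?_⟩
  · -- labels
    intro ℓ hℓ
    have hℓ' : ℓ ∈ T'.labels := hlab ▸ hℓ
    -- the cluster of lab ℓ is the minimal cluster containing ℓ, on both sides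
    have key : T.cluster (T.lab ℓ) = T'.cluster (T'.lab ℓ) := by
      have h1 : T'.cluster (T'.lab ℓ) ⊆ T.cluster (T.lab ℓ) := by
        obtain ⟨w, hw⟩ : T.cluster (T.lab ℓ) ∈ T'.Cl := by rw [← hcl]; exact ⟨_, rfl⟩
        have hmem : ℓ ∈ T'.cluster w := by
          rw [← hw]; exact ⟨hℓ, T.toParentTree.anc_refl' _⟩
        rw [hw]
        exact T'.cluster_mono hmem.2
      have h2 : T.cluster (T.lab ℓ) ⊆ T'.cluster (T'.lab ℓ) := by
        obtain ⟨w, hw⟩ : T'.cluster (T'.lab ℓ) ∈ T.Cl := by rw [hcl]; exact ⟨_, rfl⟩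
        have hmem : ℓ ∈ T.cluster w := by
          rw [← hw]; exact ⟨hℓ', T'.toParentTree.anc_refl' _⟩
        rw [hw]
        exact T.cluster_mono hmem.2
      exact h2.antisymm h1
    have : T'.cluster (f (T.lab ℓ)) = T'.cluster (T'.lab ℓ) := by
      rw [← hf, key]
    exact (T'.cluster_inj this).symm
  · -- adjacency
    intro u v
    have hcov : ∀ a b : V,
        (T.toParentTree.parent b = a ∧ a ≠ b) ↔
          (T'.toParentTree.parent (f b) = f a ∧ f a ≠ f b) := by
      intro a b
      rw [T.toParentTree.parent_eq_iff', T'.toParentTree.parent_eq_iff']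
      constructor
      · rintro ⟨h1, h2, h3⟩
        refine ⟨(hanc a b).1 h1, fun h => h2 (hinjf h), ?_⟩
        intro w' hw1 hw2
        have hw1' : T.toParentTree.anc a (g w') := by
          rw [hanc, hfg]; exact hw1
        have hw2' : T.toParentTree.anc (g w') b := by
          rw [hanc, hfg]; exact hw2
        rcases h3 (g w') hw1' hw2' with h | h
        · left; rw [← hfg w', h]
        · right; rw [← hfg w', h]
      · rintro ⟨h1, h2, h3⟩
        refine ⟨(hanc a b).2 h1, fun h => h2 (by rw [h]), ?_⟩
        intro w hw1 hw2
        rcases h3 (f w) ((hanc a w).1 hw1) ((hanc w b).1 hw2) with h | h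
        · left; exact hinjf h
        · right; exact hinjf h
    show T.toParentTree.adj u v ↔ T'.toParentTree.adj (f u) (f v)
    unfold ParentTree.adj
    constructor
    · rintro ⟨hne, hp | hp⟩
      · obtain ⟨h1, h2⟩ := (hcov v u).1 ⟨hp, hne.symm⟩
        exact ⟨h2.symm, Or.inl h1⟩
      · obtain ⟨h1, h2⟩ := (hcov u v).1 ⟨hp, hne⟩
        exact ⟨h2, Or.inr h1⟩
    · rintro ⟨hne, hp | hp⟩
      · obtain ⟨h1, h2⟩ := (hcov v u).2 ⟨hp, hne.symm⟩
        exact ⟨h2.symm, Or.inl h1⟩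
      · obtain ⟨h1, h2⟩ := (hcov u v).2 ⟨hp, hne⟩
        exact ⟨h2, Or.inr h1⟩
end

section
/- If a semi-labeled tree T ancestrally displays a profile P = {T₁, …, T_k}, then for any subset X of the label set L(P), the restriction T|X ancestrally displays the restricted profile P|X = {T₁|(X ∩ L(T₁)), …, T_k|(X ∩ L(T_k))}. -/
open Function Set

/-- If a semi-labeled tree `T` (on label set `L(P)`)
ancestrally displays a profile `P`, then for any `X ⊆ L(P)` the restriction
`T|X` ancestrally displays the restricted profile `P|X`; i.e., for each `i`,
`Cl(Tᵢ|(X ∩ L(Tᵢ))) ⊆ Cl((T|X) | (X ∩ L(Tᵢ)))` (restrictions are expressed by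
their cluster sets). -/
theorem stmt10 {L V W : Type*} [Fintype V] [Fintype W] {k : ℕ}
    (P : Fin k → SemiLabeledTree L V) (T : SemiLabeledTree L W)
    (hlab : T.labels = LP P) (hdisp : ∀ i, Displays T (P i))
    (X : Set L) (hX : X ⊆ LP P) :
    ∀ i, restrictCl (P i).Cl (X ∩ (P i).labels) ⊆
      restrictCl (restrictCl T.Cl X) (X ∩ (P i).labels) := by
  intro i Y hY
  obtain ⟨C, hC, hYeq, hYne⟩ := hY
  obtain ⟨D, hD, hCeq, hCne⟩ := hdisp i hC
  refine ⟨D ∩ X, ⟨D, hD, rfl, ?_⟩, ?_, hYne⟩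
  · obtain ⟨y, hy⟩ := hYne
    rw [hYeq, hCeq] at hy
    exact ⟨y, hy.1.1, hy.2.1⟩
  · rw [hYeq, hCeq]
    ext x
    constructor
    · rintro ⟨⟨h1, h2⟩, h3, h4⟩; exact ⟨⟨h1, h3⟩, h3, h4⟩
    · rintro ⟨⟨h1, h3⟩, _, h4⟩; exact ⟨⟨h1, h4⟩, h3, h4⟩
end

section
/- Let U be a valid position for P, let S be the set of semi-universal labels in U, let U' be the successor of U with respect to S, and let W₁, …, W_p be the label sets of the connected components of H_P(U'). Then U'|W_j is a valid position for every j. -/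
open Function Set

section Aux

variable {L V : Type*} {k : ℕ}

lemma ParentTree.iterate_root (t : ParentTree V) (n : ℕ) : t.parent^[n] t.root = t.root :=
  Function.iterate_fixed t.parent_root n

lemma ParentTree.anc_antisymm (t : ParentTree V) {u v : V} (h1 : t.anc u v)
    (h2 : t.anc v u) : u = v := by
  obtain ⟨n, hn⟩ := h1
  obtain ⟨m, hm⟩ := h2
  rcases Nat.eq_zero_or_pos (m + n) with h0 | hpos
  · have hn0 : n = 0 := by omega
    subst hn0; exact hn.symm
  · have hcyc : t.parent^[m + n] v = v := by
      rw [Function.iterate_add_apply, hn, hm]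
    have hper : ∀ c : ℕ, t.parent^[(m + n) * c] v = v := by
      intro c
      induction c with
      | zero => simp
      | succ c ih =>
        have : (m + n) * (c + 1) = (m + n) * c + (m + n) := by ring
        rw [this, Function.iterate_add_apply, hcyc, ih]
    obtain ⟨N, hN⟩ := t.reaches_root v
    have hNle : N ≤ (m + n) * N := Nat.le_mul_of_pos_left N hpos
    have hsplit : (m + n) * N = ((m + n) * N - N) + N := by omega
    have hvroot : v = t.root := by
      have := hper N
      rw [hsplit, Function.iterate_add_apply, hN, t.iterate_root] at this
      exact this.symm
    have huroot : u = t.root := by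
      rw [← hn, hvroot, t.iterate_root]
    rw [huroot, hvroot]

lemma SemiLabeledTree.labelLe_refl (T : SemiLabeledTree L V) (ℓ : L) : T.labelLe ℓ ℓ :=
  ⟨0, rfl⟩

/-- Case analysis for the successor. -/
lemma succ_cases (P : Fin k → SemiLabeledTree L V) (U : Fin k → Set L) (S : Set L)
    (i : Fin k) :
    (∃ ℓ₀ ∈ S, U i = {ℓ₀} ∧ Succ P U S i = ChL P i ℓ₀) ∨
      ((¬ ∃ ℓ ∈ S, U i = {ℓ}) ∧ Succ P U S i = U i) := by
  classical
  by_cases h : ∃ ℓ ∈ S, U i = {ℓ}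
  · obtain ⟨ℓ₀, hℓ₀S, hUi⟩ := h
    left
    refine ⟨ℓ₀, hℓ₀S, hUi, ?_⟩
    ext m
    constructor
    · rintro (⟨ℓ, hℓS, hUi', hm⟩ | ⟨hne, _⟩)
      · have : ℓ = ℓ₀ := by
          have := hUi'.symm.trans hUi
          exact Set.singleton_eq_singleton_iff.mp this
        rwa [← this]
      · exact absurd ⟨ℓ₀, hℓ₀S, hUi⟩ hne
    · intro hm
      exact Or.inl ⟨ℓ₀, hℓ₀S, hUi, hm⟩
  · right
    refine ⟨h, ?_⟩
    ext m
    constructor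
    · rintro (⟨ℓ, hℓS, hUi', _⟩ | ⟨_, hm⟩)
      · exact absurd ⟨ℓ, hℓS, hUi'⟩ h
      · exact hm
    · intro hm
      exact Or.inr ⟨h, hm⟩

lemma succ_subset_labels (P : Fin k → SemiLabeledTree L V) (U : Fin k → Set L)
    (S : Set L) (hU : ∀ i, U i ⊆ (P i).labels) (i : Fin k) :
    Succ P U S i ⊆ (P i).labels := by
  rcases succ_cases P U S i with ⟨ℓ₀, _, _, hsucc⟩ | ⟨_, hsucc⟩
  · rw [hsucc]; exact fun m hm => hm.1
  · rw [hsucc]; exact hU i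

/-- Lemma A: the successor removes exactly the semi-universal labels from each
descendant set. -/
lemma desci_succ (P : Fin k → SemiLabeledTree L V)
    (hfull : ∀ i, (P i).FullyLabeled) (hsing : ∀ i, (P i).SingularlyLabeled)
    (U : Fin k → Set L) (hvalid : ValidPos P U)
    (S : Set L) (hS : S = {ℓ : L | SemiUniversal P U ℓ}) (i : Fin k) :
    Desci P (Succ P U S) i = Desci P U i \ S := by
  have hSmem : ∀ ℓ ∈ S, ℓ ∈ (P i).labels → U i = {ℓ} := by
    intro ℓ hℓ hlab
    rw [hS] at hℓ
    exact hℓ.2 i hlab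
  rcases succ_cases P U S i with ⟨ℓ₀, hℓ₀S, hUi, hsucc⟩ | ⟨hno, hsucc⟩
  · -- changed case
    have hℓ₀lab : ℓ₀ ∈ (P i).labels := hvalid.1 i (hUi ▸ rfl)
    ext ℓ
    constructor
    · rintro ⟨hlab, m, hmCh, n, hn⟩
      rw [hsucc] at hmCh
      obtain ⟨hmlab, hmne, hmpar⟩ := hmCh
      have hle : (P i).labelLe ℓ₀ ℓ := by
        refine ⟨n + 1, ?_⟩
        rw [Function.iterate_succ_apply', hn, hmpar]
      have hne : ℓ ≠ ℓ₀ := by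
        intro heq
        subst heq
        have h1 : (P i).toParentTree.anc ((P i).lab m) ((P i).lab ℓ) := ⟨n, hn⟩
        have h2 : (P i).toParentTree.anc ((P i).lab ℓ) ((P i).lab m) := ⟨1, by
          simpa using hmpar⟩
        exact hmne ((P i).toParentTree.anc_antisymm h1 h2)
      refine ⟨⟨hlab, ℓ₀, hUi ▸ rfl, hle⟩, ?_⟩
      intro hℓS
      have := hSmem ℓ hℓS hlab
      rw [hUi] at this
      exact hne (Set.singleton_eq_singleton_iff.mp this.symm)
    · rintro ⟨⟨hlab, ℓ', hℓ'Ui, hle⟩, hℓnS⟩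
      rw [hUi] at hℓ'Ui
      rw [Set.mem_singleton_iff] at hℓ'Ui
      subst hℓ'Ui
      obtain ⟨n, hn⟩ := hle
      have hne : ℓ ≠ ℓ' := fun h => hℓnS (h ▸ hℓ₀S)
      have hlabne : (P i).lab ℓ ≠ (P i).lab ℓ' := by
        intro h
        exact hne (hsing i ℓ hlab ℓ' hℓ₀lab h)
      have hex : ∃ n, (P i).parent^[n] ((P i).lab ℓ) = (P i).lab ℓ' := ⟨n, hn⟩
      classical
      set n₀ := Nat.find hex with hn₀def
      have hn₀ : (P i).parent^[n₀] ((P i).lab ℓ) = (P i).lab ℓ' := Nat.find_spec hex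
      have hn₀pos : 0 < n₀ := by
        rcases Nat.eq_zero_or_pos n₀ with h | h
        · rw [h] at hn₀; exact absurd hn₀ hlabne
        · exact h
      set v := (P i).parent^[n₀ - 1] ((P i).lab ℓ) with hvdef
      have hvpar : (P i).parent v = (P i).lab ℓ' := by
        have : n₀ = (n₀ - 1) + 1 := by omega
        rw [this, Function.iterate_succ_apply'] at hn₀
        exact hn₀
      have hvne : v ≠ (P i).lab ℓ' := Nat.find_min hex (by omega)
      obtain ⟨m, hmlab, hmv⟩ := hfull i v
      refine ⟨hlab, m, ?_, ⟨n₀ - 1, by rw [← hvdef, hmv]⟩⟩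
      rw [hsucc]
      exact ⟨hmlab, by rw [hmv]; exact hvne, by rw [hmv]; exact hvpar⟩
  · -- unchanged case
    simp only [Desci, hsucc]
    ext ℓ
    simp only [Set.mem_diff, Set.mem_setOf_eq, iff_self_and, and_imp]
    rintro hlab _ hℓS
    exact hno ⟨ℓ, hℓS, hSmem ℓ hℓS hlab⟩

/-- Lemma B: path connectivity within descendant sets. -/
lemma reach_of_desc (P : Fin k → SemiLabeledTree L V)
    (hfull : ∀ i, (P i).FullyLabeled) (hsing : ∀ i, (P i).SingularlyLabeled)
    (X : Fin k → Set L) (hX : ∀ i, X i ⊆ (P i).labels)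
    (i : Fin k) {ℓ' ℓ : L} (hℓ' : ℓ' ∈ X i) (hlab : ℓ ∈ (P i).labels)
    (hle : (P i).labelLe ℓ' ℓ) :
    dgReach P (DescP P X) ℓ' ℓ := by
  obtain ⟨n, hn⟩ := hle
  induction n generalizing ℓ with
  | zero =>
    have h : ℓ = ℓ' := hsing i ℓ hlab ℓ' (hX i hℓ') hn
    exact h ▸ Relation.ReflTransGen.refl
  | succ n ih =>
    by_cases hroot : (P i).parent ((P i).lab ℓ) = (P i).lab ℓ
    · apply ih hlab
      rw [Function.iterate_succ_apply, hroot] at hn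
      exact hn
    · obtain ⟨m, hmlab, hmv⟩ := hfull i ((P i).parent ((P i).lab ℓ))
      have hmn : (P i).parent^[n] ((P i).lab m) = (P i).lab ℓ' := by
        rw [hmv]
        rwa [Function.iterate_succ_apply] at hn
      have hreach : dgReach P (DescP P X) ℓ' m := ih hmlab hmn
      have hmDesc : m ∈ DescP P X :=
        Set.mem_iUnion.mpr ⟨i, hmlab, ℓ', hℓ', ⟨n, hmn⟩⟩
      have hℓDesc : ℓ ∈ DescP P X :=
        Set.mem_iUnion.mpr ⟨i, hlab, ℓ', hℓ', ⟨n + 1, hn⟩⟩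
      refine hreach.tail ?_
      refine ⟨hmDesc, hℓDesc, i, hmlab, hlab, Or.inl ⟨hmv.symm, ?_⟩⟩
      intro h
      rw [hmv] at h
      exact hroot h.symm

end Aux

/-- Let `U` be a valid position, `S` the set of
semi-universal labels in `U`, `U'` the successor of `U` with respect to `S`,
and `W₁, …, W_p` the label sets of the connected components of `H_P(U')`.
Then `U'|W_j` is a valid position for every `j`. -/
theorem stmt15 {L V : Type*} [Fintype V] {k p : ℕ}
    (P : Fin k → SemiLabeledTree L V)
    (hfull : ∀ i, (P i).FullyLabeled) (hsing : ∀ i, (P i).SingularlyLabeled)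
    (U : Fin k → Set L) (hvalid : ValidPos P U)
    (S : Set L) (hS : S = {ℓ : L | SemiUniversal P U ℓ})
    (U' : Fin k → Set L) (hU' : U' = Succ P U S)
    (W : Fin p → Set L) (hW : IsComponents P (DescP P U') W) :
    ∀ j, ValidPos P (fun i => U' i ∩ W j) := by
  classical
  intro j
  obtain ⟨hWne, hWsub, hWuniq, hWiff⟩ := hW
  have hU'sub : ∀ i, U' i ⊆ (P i).labels := by
    rw [hU']; exact succ_subset_labels P U S hvalid.1
  have hA : ∀ i, Desci P U' i = Desci P U i \ S := by
    rw [hU']; exact desci_succ P hfull hsing U hvalid S hS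
  have hDescP' : DescP P U' = DescP P U \ S := by
    unfold DescP
    ext ℓ
    simp only [Set.mem_iUnion, Set.mem_diff, hA]
    tauto
  have hkey : ∀ i, Desci P U' i = DescP P U' ∩ (P i).labels := by
    intro i
    rw [hA i, hvalid.2.2 i, hDescP']
    ext ℓ
    simp only [Set.mem_diff, Set.mem_inter_iff]
    tauto
  -- unique component of an element of `DescP P U'`
  have hsame : ∀ ℓ ∈ W j, ∀ m, ℓ ∈ DescP P U' → m ∈ DescP P U' →
      dgReach P (DescP P U') ℓ m → m ∈ W j := by
    intro ℓ hℓW m hℓD hmD hreach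
    obtain ⟨j', hℓj', hmj'⟩ := (hWiff ℓ m).mpr ⟨hℓD, hmD, hreach⟩
    obtain ⟨j'', _, huniq⟩ := hWuniq ℓ hℓD
    have h1 : j' = j'' := huniq j' hℓj'
    have h2 : j = j'' := huniq j hℓW
    rw [h2, ← h1]
    exact hmj'
  have hmemD : ∀ i, ∀ ℓ' ∈ U' i, ∀ ℓ ∈ (P i).labels, (P i).labelLe ℓ' ℓ →
      ℓ ∈ DescP P U' := by
    intro i ℓ' hℓ' ℓ hlab hle
    exact Set.mem_iUnion.mpr ⟨i, hlab, ℓ', hℓ', hle⟩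
  have hmemD' : ∀ i, ∀ ℓ' ∈ U' i, ℓ' ∈ DescP P U' := by
    intro i ℓ' hℓ'
    exact hmemD i ℓ' hℓ' ℓ' (hU'sub i hℓ') ((P i).labelLe_refl ℓ')
  have hC : ∀ i, Desci P (fun i => U' i ∩ W j) i = Desci P U' i ∩ W j := by
    intro i
    ext ℓ
    constructor
    · rintro ⟨hlab, ℓ', ⟨hℓ'U', hℓ'W⟩, hle⟩
      have hreach : dgReach P (DescP P U') ℓ' ℓ := by
        apply reach_of_desc P hfull hsing U' hU'sub i hℓ'U' hlab hle
      refine ⟨⟨hlab, ℓ', hℓ'U', hle⟩, ?_⟩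
      exact hsame ℓ' hℓ'W ℓ (hmemD' i ℓ' hℓ'U') (hmemD i ℓ' hℓ'U' ℓ hlab hle) hreach
    · rintro ⟨⟨hlab, ℓ', hℓ'U', hle⟩, hℓW⟩
      have hreach : dgReach P (DescP P U') ℓ' ℓ := by
        apply reach_of_desc P hfull hsing U' hU'sub i hℓ'U' hlab hle
      have hℓ'W : ℓ' ∈ W j := by
        obtain ⟨j', hℓ'j', hℓj'⟩ := (hWiff ℓ' ℓ).mpr
          ⟨hmemD' i ℓ' hℓ'U', hmemD i ℓ' hℓ'U' ℓ hlab hle, hreach⟩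
        obtain ⟨j'', _, huniq⟩ := hWuniq ℓ (hmemD i ℓ' hℓ'U' ℓ hlab hle)
        have h1 : j' = j'' := huniq j' hℓj'
        have h2 : j = j'' := huniq j hℓW
        rw [h2, ← h1]
        exact hℓ'j'
      exact ⟨hlab, ℓ', ⟨hℓ'U', hℓ'W⟩, hle⟩
  have hDescPV : DescP P (fun i => U' i ∩ W j) = DescP P U' ∩ W j := by
    unfold DescP
    ext ℓ
    simp only [Set.mem_iUnion, Set.mem_inter_iff, hC]
    tauto
  refine ⟨?_, ?_, ?_⟩
  · intro i ℓ hℓ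
    exact hU'sub i hℓ.1
  · intro i ⟨a, ⟨haU', haW⟩, b, ⟨hbU', hbW⟩, hab⟩
    rcases succ_cases P U S i with ⟨ℓ₀, hℓ₀S, hUi, hsucc⟩ | ⟨hno, hsucc⟩
    · refine ⟨(P i).lab ℓ₀, ?_⟩
      rintro a ⟨haU', _⟩
      rw [hU', hsucc] at haU'
      exact ⟨haU'.2.1, haU'.2.2⟩
    · have hUeq : U' i = U i := by rw [hU', hsucc]
      rw [hUeq] at haU' hbU'
      obtain ⟨q, hq⟩ := hvalid.2.1 i ⟨a, haU', b, hbU', hab⟩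
      refine ⟨q, ?_⟩
      rintro c ⟨hcU', _⟩
      rw [hUeq] at hcU'
      exact hq c hcU'
  · intro i
    rw [hC i, hkey i, hDescPV]
    ext ℓ
    simp only [Set.mem_inter_iff]
    tauto
end
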